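/- Let $M$ be a regular set of measures on $(\Omega, \mathcal{F})$ with filtration $\mathcal{F}_n$, and let $\{f_m, \mathcal{F}_m\}_{m=0}^\infty$ be a nonnegative uniformly integrable local regular super-martingale relative to $M$ with decomposition $f_m = M_m - \sum_{i=1}^m \bar g^0_i$, where $M_m$ is a martingale and $\bar g^0_i \ge 0$. Then, setting $g_\infty = \lim_{m\to\infty} \sum_{i=1}^m \bar g^0_i$ and $f_\infty = \lim_m f_m$, the random variable $\xi = \frac{f_\infty + g_\infty}{f_0}$ satisfies $E^P \xi = 1$ for all $P \in M$, and $M_m = f_0 \cdot E^P\{\xi \mid \mathcal{F}_m\}$ for all $m$ and $P \in M$. -/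

import Mathlib

open MeasureTheory Filter

private lemma aux_integrable_of_tendsto {Ω : Type*} [MeasurableSpace Ω] (P : Measure Ω)
    (h : ℕ → Ω → ℝ) (hint : ∀ n, Integrable (h n) P)
    (hpos : ∀ n ω, 0 ≤ h n ω) (C : ℝ)
    (hbound : ∀ n, ∫ ω, h n ω ∂P ≤ C) (L : Ω → ℝ)
    (htend : ∀ᵐ ω ∂P, Tendsto (fun n => h n ω) atTop (nhds (L ω))) :
    Integrable L P := by
  have hmeas : AEStronglyMeasurable L P :=
    aestronglyMeasurable_of_tendsto_ae atTop (fun n => (hint n).1) htend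
  refine ⟨hmeas, ?_⟩
  have h1 : (fun ω => (‖L ω‖₊ : ENNReal)) =ᵐ[P]
      fun ω => liminf (fun n => (‖h n ω‖₊ : ENNReal)) atTop := by
    filter_upwards [htend] with ω hω
    exact (ENNReal.tendsto_coe.2 hω.nnnorm).liminf_eq.symm
  rw [HasFiniteIntegral]
  change ∫⁻ ω, (‖L ω‖₊ : ENNReal) ∂P < ⊤
  rw [lintegral_congr_ae h1]
  have h2 : ∫⁻ ω, liminf (fun n => (‖h n ω‖₊ : ENNReal)) atTop ∂P
      ≤ liminf (fun n => ∫⁻ ω, (‖h n ω‖₊ : ENNReal) ∂P) atTop :=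
    lintegral_liminf_le' fun n => (hint n).1.enorm
  have h3 : ∀ n, ∫⁻ ω, (‖h n ω‖₊ : ENNReal) ∂P ≤ ENNReal.ofReal C := by
    intro n
    have heq : ∫⁻ ω, (‖h n ω‖₊ : ENNReal) ∂P = ENNReal.ofReal (∫ ω, h n ω ∂P) := by
      rw [ofReal_integral_eq_lintegral_ofReal (hint n) (Eventually.of_forall (hpos n))]
      refine lintegral_congr fun ω => ?_
      exact Real.enorm_eq_ofReal (hpos n ω)
    rw [heq]
    exact ENNReal.ofReal_le_ofReal (hbound n)
  have h4 : liminf (fun n => ∫⁻ ω, (‖h n ω‖₊ : ENNReal) ∂P) atTop ≤ ENNReal.ofReal C :=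
    liminf_le_of_frequently_le (Frequently.of_forall h3)
  exact lt_of_le_of_lt (le_trans h2 h4) ENNReal.ofReal_lt_top

/-- From Theorem 5.2: for a nonnegative uniformly integrable local regular super-martingale
`f_m = M_m - ∑_{i ≤ m} ḡ⁰_i` (with `f₀ = c > 0` constant), the random variable
`ξ = (f_∞ + g_∞)/f₀` has expectation `1` under every `P ∈ M` and `M_m = f₀ E^P[ξ | ℱ m]`. -/
theorem stmt16 {Ω : Type*} {m0 : MeasurableSpace Ω} (ℱ : Filtration ℕ m0)
    (M : Set (Measure Ω))
    (hprob : ∀ P ∈ M, IsProbabilityMeasure P)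
    (hequiv : ∀ P ∈ M, ∀ Q ∈ M, P ≪ Q)
    (f Mart : ℕ → Ω → ℝ) (g : ℕ → Ω → ℝ)
    (hfpos : ∀ m ω, 0 ≤ f m ω)
    (hgpos : ∀ i ω, 0 ≤ g i ω)
    (hgint : ∀ P ∈ M, ∀ i, Integrable (g i) P)
    (hmart : ∀ P ∈ M, Martingale Mart ℱ P)
    (hdecomp : ∀ m ω, f m ω = Mart m ω - ∑ i ∈ Finset.range m, g (i + 1) ω)
    (c : ℝ) (hc : 0 < c) (hf0 : ∀ ω, f 0 ω = c)
    (hui : ∀ P ∈ M, UniformIntegrable f 1 P)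
    (finf ginf : Ω → ℝ)
    (hftend : ∀ P ∈ M, ∀ᵐ ω ∂P, Tendsto (fun m => f m ω) atTop (nhds (finf ω)))
    (hgtend : ∀ P ∈ M, ∀ᵐ ω ∂P,
      Tendsto (fun m => ∑ i ∈ Finset.range m, g (i + 1) ω) atTop (nhds (ginf ω))) :
    (∀ P ∈ M, ∫ ω, (finf ω + ginf ω) / c ∂P = 1) ∧
    (∀ P ∈ M, ∀ m : ℕ,
      Mart m =ᵐ[P] fun ω => c * (P[fun ω' => (finf ω' + ginf ω') / c | ℱ m]) ω) := by
  -- main work, uniform in `P`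
  have key : ∀ P ∈ M, Integrable finf P ∧ Integrable ginf P ∧
      (∫ ω, finf ω ∂P + ∫ ω, ginf ω ∂P = c) ∧
      ∀ m, Mart m =ᵐ[P] P[fun ω => finf ω + ginf ω | ℱ m] := by
    intro P hP
    haveI := hprob P hP
    set S : ℕ → Ω → ℝ := fun n ω => ∑ i ∈ Finset.range n, g (i + 1) ω with hS
    have hSint : ∀ n, Integrable (S n) P := fun n =>
      integrable_finset_sum _ fun i _ => hgint P hP (i + 1)
    have hMint : ∀ n, Integrable (Mart n) P := (hmart P hP).integrable
    have hfint : ∀ n, Integrable (f n) P := fun n =>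
      ((hMint n).sub (hSint n)).congr (Eventually.of_forall fun ω => (hdecomp n ω).symm)
    have hSnonneg : ∀ n ω, 0 ≤ S n ω := fun n ω =>
      Finset.sum_nonneg fun i _ => hgpos (i + 1) ω
    have hSmono : ∀ ω, Monotone fun n => S n ω := fun ω =>
      monotone_nat_of_le_succ fun n => by
        simp only [hS, Finset.sum_range_succ]
        exact le_add_of_nonneg_right (hgpos _ ω)
    have hMart_eq : ∀ n ω, Mart n ω = f n ω + S n ω := fun n ω => by
      rw [hdecomp n ω]; ring
    have hMart0 : ∀ ω, Mart 0 ω = c := fun ω => by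
      rw [hMart_eq 0 ω, hf0 ω]; simp [hS]
    have hint_Mart : ∀ n, ∫ ω, Mart n ω ∂P = c := by
      intro n
      have h := (hmart P hP).setIntegral_eq (Nat.zero_le n)
        (MeasurableSet.univ : MeasurableSet[ℱ 0] Set.univ)
      rw [setIntegral_univ, setIntegral_univ] at h
      rw [← h]
      rw [integral_congr_ae (Eventually.of_forall hMart0)]
      simp
    have hsplit : ∀ n, ∫ ω, Mart n ω ∂P = ∫ ω, f n ω ∂P + ∫ ω, S n ω ∂P := fun n => by
      rw [← integral_add (hfint n) (hSint n)]
      exact integral_congr_ae (Eventually.of_forall fun ω => hMart_eq n ω)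
    have hfbound : ∀ n, ∫ ω, f n ω ∂P ≤ c := by
      intro n
      have h1 := hsplit n
      have h2 := hint_Mart n
      have h3 : 0 ≤ ∫ ω, S n ω ∂P := integral_nonneg fun ω => hSnonneg n ω
      linarith
    have hSbound : ∀ n, ∫ ω, S n ω ∂P ≤ c := by
      intro n
      have h1 := hsplit n
      have h2 := hint_Mart n
      have h3 : 0 ≤ ∫ ω, f n ω ∂P := integral_nonneg fun ω => hfpos n ω
      linarith
    have hfinfint : Integrable finf P :=
      aux_integrable_of_tendsto P f hfint hfpos c hfbound finf (hftend P hP)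
    have hginfint : Integrable ginf P :=
      aux_integrable_of_tendsto P S hSint hSnonneg c hSbound ginf (hgtend P hP)
    have hL1 : Tendsto (fun n => eLpNorm (f n - finf) 1 P) atTop (nhds 0) :=
      tendsto_Lp_finite_of_tendsto_ae le_rfl ENNReal.one_ne_top
        (fun n => (hfint n).1) (memLp_one_iff_integrable.2 hfinfint)
        (hui P hP).2.1 (hftend P hP)
    have htf : Tendsto (fun n => ∫ ω, f n ω ∂P) atTop (nhds (∫ ω, finf ω ∂P)) :=
      tendsto_integral_of_L1' finf hfinfint.1 (Eventually.of_forall hfint) hL1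
    have htS : Tendsto (fun n => ∫ ω, S n ω ∂P) atTop (nhds (∫ ω, ginf ω ∂P)) :=
      integral_tendsto_of_tendsto_of_monotone hSint hginfint
        (Eventually.of_forall hSmono) (hgtend P hP)
    have hconst : ∀ n, ∫ ω, f n ω ∂P + ∫ ω, S n ω ∂P = c := fun n => by
      rw [← hsplit n]; exact hint_Mart n
    have hsum : ∫ ω, finf ω ∂P + ∫ ω, ginf ω ∂P = c := by
      refine tendsto_nhds_unique (htf.add htS) ?_
      simp only [hconst]
      exact tendsto_const_nhds
    refine ⟨hfinfint, hginfint, hsum, fun m => ?_⟩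
    refine ae_eq_condExp_of_forall_setIntegral_eq (ℱ.le m) (hfinfint.add hginfint)
      (fun s _ _ => (hMint m).integrableOn) (fun s hs _ => ?_)
      (StronglyMeasurable.aestronglyMeasurable ((hmart P hP).stronglyAdapted m))
    have h1 : Tendsto (fun n => ∫ ω in s, f n ω ∂P + ∫ ω in s, S n ω ∂P) atTop
        (nhds (∫ ω in s, finf ω ∂P + ∫ ω in s, ginf ω ∂P)) := by
      refine Tendsto.add ?_ ?_
      · refine tendsto_setIntegral_of_L1 finf hfinfint.1 (Eventually.of_forall hfint) ?_ s
        simpa only [eLpNorm_one_eq_lintegral_enorm, Pi.sub_apply] using hL1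
      · exact integral_tendsto_of_tendsto_of_monotone (μ := P.restrict s)
          (fun n => (hSint n).integrableOn) hginfint.integrableOn
          (ae_restrict_of_ae (Eventually.of_forall hSmono))
          (ae_restrict_of_ae (hgtend P hP))
    have h2 : ∀ n, m ≤ n → ∫ ω in s, f n ω ∂P + ∫ ω in s, S n ω ∂P
        = ∫ ω in s, Mart m ω ∂P := by
      intro n hn
      rw [← integral_add (hfint n).integrableOn (hSint n).integrableOn,
        (hmart P hP).setIntegral_eq hn hs]
      exact setIntegral_congr_ae (ℱ.le m s hs)
        (Eventually.of_forall fun ω _ => (hMart_eq n ω).symm)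
    have h3 : Tendsto (fun n => ∫ ω in s, f n ω ∂P + ∫ ω in s, S n ω ∂P) atTop
        (nhds (∫ ω in s, Mart m ω ∂P)) := by
      refine Tendsto.congr' ?_ tendsto_const_nhds
      filter_upwards [eventually_ge_atTop m] with n hn using (h2 n hn).symm
    have h4 := tendsto_nhds_unique h3 h1
    rw [h4, ← integral_add hfinfint.integrableOn hginfint.integrableOn]
  constructor
  · intro P hP
    haveI := hprob P hP
    obtain ⟨hfi, hgi, hsum, _⟩ := key P hP
    have : ∫ ω, (finf ω + ginf ω) / c ∂P = (∫ ω, (finf ω + ginf ω) ∂P) / c :=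
      integral_div c _
    rw [this, integral_add hfi hgi, hsum, div_self hc.ne']
  · intro P hP m
    obtain ⟨_, _, _, hmain⟩ := key P hP
    have hsmul : (fun ω' => (finf ω' + ginf ω') / c)
        = c⁻¹ • fun ω' => finf ω' + ginf ω' := by
      funext ω; simp [div_eq_inv_mul]
    rw [hsmul]
    have hc2 := condExp_smul (μ := P) (m := ℱ m) c⁻¹ fun ω' => finf ω' + ginf ω'
    filter_upwards [hmain m, hc2] with ω h1 h2
    rw [h2]
    simp only [Pi.smul_apply, smul_eq_mul, ← mul_assoc, mul_inv_cancel₀ hc.ne', one_mul]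
    exact h1
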